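/- arXiv:2005.04110 — 4 statements merged into one kernel-verified Lean document; each statement's English description precedes it below -/
import Mathlib

section
/- Let a : ℤ_{>0} → ℚ and set ĥ^{a}(u) = exp(∑_{r>0} (-1)^{r-1} a_r h_r u^r / r) in Q[h_r | r>0][[u]]. Then all coefficients of ĥ^{a}(u) lie in the ℤ-subalgebra ℤ[ĥ_k | k > 0] (where ĥ(u) = ĥ^{1}(u) for the constant function 1) if and only if for every n > 0, the Möbius convolution (μ * a)(n) = ∑_{d | n} μ(n/d) a_d is an integer divisible by n. -/
open PowerSeries

/-- The polynomial algebra `ℚ[h_r | r > 0]`, with `X r` (for `r ≥ 1`) playing the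
role of `h_r`. -/
abbrev Rh : Type := MvPolynomial ℕ ℚ

/-- Formal exponential of a power series (intended for series with zero constant term). -/
noncomputable def expS {A : Type*} [CommRing A] [Algebra ℚ A] (f : PowerSeries A) :
    PowerSeries A :=
  PowerSeries.mk fun k =>
    ∑ n ∈ Finset.range (k + 1), (n.factorial : ℚ)⁻¹ • PowerSeries.coeff k (f ^ n)

open Finset

variable {A : Type*} [CommRing A] [Algebra ℚ A]

lemma coeff_expS (f : A⟦X⟧) (k : ℕ) : coeff k (expS f) =
    ∑ n ∈ range (k+1), (n.factorial : ℚ)⁻¹ • coeff k (f ^ n) := by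
  simp [expS]

omit [Algebra ℚ A] in
lemma coeff_pow_eq_zero {f : A⟦X⟧} (hf : constantCoeff f = 0) {k n : ℕ} (h : k < n) :
    coeff k (f ^ n) = 0 := by
  have : (X : A⟦X⟧)^n ∣ f^n := pow_dvd_pow_of_dvd (X_dvd_iff.mpr hf) n
  exact (X_pow_dvd_iff.mp this) k h

lemma constantCoeff_expS (f : A⟦X⟧) : constantCoeff (expS f) = 1 := by
  rw [← coeff_zero_eq_constantCoeff_apply, coeff_expS]
  simp

lemma deriv_expS {f : A⟦X⟧} (hf : constantCoeff f = 0) :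
    d⁄dX A (expS f) = d⁄dX A f * expS f := by
  ext k
  rw [coeff_derivative, coeff_expS, Finset.sum_mul]
  have step : ∀ n : ℕ, ((n.factorial : ℚ)⁻¹ • coeff (k+1) (f ^ n)) * ((k:A) + 1)
      = (n.factorial : ℚ)⁻¹ • ((n : ℚ) • coeff k (f ^ (n-1) * d⁄dX A f)) := by
    intro n
    rw [smul_mul_assoc]
    congr 1
    rw [← coeff_derivative, Derivation.leibniz_pow, smul_eq_mul, map_nsmul,
      ← Nat.cast_smul_eq_nsmul ℚ]
  rw [Finset.sum_congr rfl (fun n _ => step n)]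
  -- reindex LHS
  rw [Finset.sum_range_succ']
  simp only [Nat.cast_zero, zero_smul, smul_zero, add_zero]
  have hfac : ∀ m : ℕ, ((Nat.factorial (m+1) : ℚ))⁻¹ • (((m+1 : ℕ) : ℚ) •
      coeff k (f ^ m * d⁄dX A f)) = (m.factorial : ℚ)⁻¹ • coeff k (f ^ m * d⁄dX A f) := by
    intro m
    rw [smul_smul]
    congr 1
    rw [Nat.factorial_succ]
    push_cast
    rw [mul_comm ((m:ℚ)+1)]
    rw [mul_inv, mul_assoc, inv_mul_cancel₀ (by positivity)]
    ring
  simp only [Nat.add_sub_cancel]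
  rw [Finset.sum_congr rfl (fun m _ => hfac m)]
  -- RHS
  rw [coeff_mul]
  have hext : ∀ p ∈ antidiagonal k, coeff p.1 (d⁄dX A f) * coeff p.2 (expS f)
      = ∑ m ∈ range (k+1), (m.factorial:ℚ)⁻¹ •
        (coeff p.1 (d⁄dX A f) * coeff p.2 (f^m)) := by
    intro p hp
    have hp2 : p.2 ≤ k := Finset.HasAntidiagonal.antidiagonal.snd_le hp
    calc coeff p.1 (d⁄dX A f) * coeff p.2 (expS f)
        = ∑ m ∈ range (p.2+1), (m.factorial:ℚ)⁻¹ •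
            (coeff p.1 (d⁄dX A f) * coeff p.2 (f^m)) := by
          rw [coeff_expS, Finset.mul_sum]
          exact Finset.sum_congr rfl fun m _ => (mul_smul_comm _ _ _)
      _ = ∑ m ∈ range (k+1), (m.factorial:ℚ)⁻¹ •
            (coeff p.1 (d⁄dX A f) * coeff p.2 (f^m)) := by
          refine Finset.sum_subset (Finset.range_subset_range.2 (by omega)) fun m hm hnot => ?_
          have h0 : coeff p.2 (f^m) = 0 :=
            coeff_pow_eq_zero hf (by simp only [Finset.mem_range] at hnot hm; omega)
          rw [h0, mul_zero, smul_zero]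
  rw [Finset.sum_congr rfl hext, Finset.sum_comm]
  refine Finset.sum_congr rfl fun m _ => ?_
  rw [← Finset.smul_sum, ← coeff_mul, mul_comm]

lemma mul_cast_succ (x : A) (n : ℕ) : x * ((n:A)+1) = (((n:ℚ)+1)) • x := by
  rw [Algebra.smul_def]
  push_cast
  ring

lemma ext_of_deriv {f g : A⟦X⟧} (h1 : d⁄dX A f = d⁄dX A g)
    (h2 : constantCoeff f = constantCoeff g) : f = g := by
  ext n
  cases n with
  | zero => simpa using h2
  | succ n =>
    have h := congrArg (coeff n) h1
    rw [coeff_derivative, coeff_derivative, mul_cast_succ, mul_cast_succ] at h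
    have := congrArg (fun t => (((n:ℚ)+1))⁻¹ • t) h
    simpa [smul_smul, inv_mul_cancel₀ (show ((n:ℚ)+1) ≠ 0 by positivity)] using this

lemma expS_zero : expS (0 : A⟦X⟧) = 1 := by
  ext k
  rw [coeff_expS, Finset.sum_eq_single 0]
  · simp
  · intro n _ hn
    rw [zero_pow hn, map_zero, smul_zero]
  · simp

lemma expS_mul_expS_neg {f : A⟦X⟧} (hf : constantCoeff f = 0) :
    expS f * expS (-f) = 1 := by
  have hnf : constantCoeff (-f) = 0 := by rw [map_neg, hf, neg_zero]
  apply ext_of_deriv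
  · rw [Derivation.leibniz, smul_eq_mul, smul_eq_mul, deriv_expS hf, deriv_expS hnf,
      map_neg, Derivation.map_one_eq_zero]
    ring
  · simp [map_mul, constantCoeff_expS]

lemma expS_add {f g : A⟦X⟧} (hf : constantCoeff f = 0) (hg : constantCoeff g = 0) :
    expS (f + g) = expS f * expS g := by
  have hfg : constantCoeff (f + g) = 0 := by rw [map_add, hf, hg, add_zero]
  have hnf : constantCoeff (-f) = 0 := by rw [map_neg, hf, neg_zero]
  have hng : constantCoeff (-g) = 0 := by rw [map_neg, hg, neg_zero]
  have h1 : expS (f+g) * (expS (-f) * expS (-g)) = 1 := by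
    apply ext_of_deriv
    · rw [Derivation.leibniz, Derivation.leibniz, smul_eq_mul, smul_eq_mul, smul_eq_mul,
        smul_eq_mul, deriv_expS hfg, deriv_expS hnf, deriv_expS hng,
        map_add, map_neg, map_neg, Derivation.map_one_eq_zero]
      ring
    · simp [map_mul, constantCoeff_expS]
  calc expS (f+g) = expS (f+g) * ((expS (-f) * expS f) * (expS (-g) * expS g)) := by
        rw [mul_comm (expS (-f)), mul_comm (expS (-g)), expS_mul_expS_neg hf,
          expS_mul_expS_neg hg, one_mul, mul_one]
    _ = (expS (f+g) * (expS (-f) * expS (-g))) * (expS f * expS g) := by ring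
    _ = expS f * expS g := by rw [h1, one_mul]

lemma expS_sum {I : Type*} {s : Finset I} {F : I → A⟦X⟧}
    (h : ∀ i ∈ s, constantCoeff (F i) = 0) :
    expS (∑ i ∈ s, F i) = ∏ i ∈ s, expS (F i) := by
  induction s using Finset.cons_induction with
  | empty => simp [expS_zero]
  | cons i s his ih =>
    rw [Finset.sum_cons, Finset.prod_cons,
      expS_add (h i (Finset.mem_cons_self i s)) ?_, ih (fun j hj => h j (Finset.mem_cons.2 (Or.inr hj)))]
    rw [map_sum]
    exact Finset.sum_eq_zero fun j hj => h j (Finset.mem_cons.2 (Or.inr hj))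

section Subring

variable (S : Subring A)

omit [Algebra ℚ A] in
lemma coeff_mul_mem {f g : A⟦X⟧} (hf : ∀ k, coeff k f ∈ S) (hg : ∀ k, coeff k g ∈ S) :
    ∀ k, coeff k (f * g) ∈ S := by
  intro k
  rw [coeff_mul]
  exact Subring.sum_mem _ fun p _ => S.mul_mem (hf _) (hg _)

omit [Algebra ℚ A] in
lemma coeff_one_mem : ∀ k, coeff k (1 : A⟦X⟧) ∈ S := by
  intro k
  rw [coeff_one]
  split
  · exact S.one_mem
  · exact S.zero_mem

omit [Algebra ℚ A] in
lemma coeff_prod_mem {I : Type*} {s : Finset I} {F : I → A⟦X⟧}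
    (h : ∀ i ∈ s, ∀ k, coeff k (F i) ∈ S) :
    ∀ k, coeff k (∏ i ∈ s, F i) ∈ S := by
  induction s using Finset.cons_induction with
  | empty => simpa using coeff_one_mem S
  | cons i s his ih =>
    rw [Finset.prod_cons]
    exact coeff_mul_mem S (h i (Finset.mem_cons_self i s))
      (ih fun j hj k => h j (Finset.mem_cons.2 (Or.inr hj)) k)

omit [Algebra ℚ A] in
lemma coeff_npow_mem {f : A⟦X⟧} (hf : ∀ k, coeff k f ∈ S) (n : ℕ) :
    ∀ k, coeff k (f ^ n) ∈ S := by
  induction n with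
  | zero => simpa using coeff_one_mem S
  | succ n ih => rw [pow_succ]; exact coeff_mul_mem S ih hf

omit [Algebra ℚ A] in
lemma coeff_inv_mem {f g : A⟦X⟧} (h : f * g = 1) (h0 : constantCoeff f = 1)
    (hf : ∀ k, coeff k f ∈ S) : ∀ k, coeff k g ∈ S := by
  intro k
  induction k using Nat.strong_induction_on with
  | _ k ih =>
    have hc := congrArg (coeff k) h
    rw [coeff_mul] at hc
    have hmem : ((0:ℕ), k) ∈ antidiagonal k := by simp
    rw [← Finset.add_sum_erase _ _ hmem] at hc
    simp only [coeff_zero_eq_constantCoeff, h0, one_mul] at hc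
    have hgk : coeff k g = coeff k 1 -
        ∑ p ∈ (antidiagonal k).erase ((0:ℕ), k), coeff p.1 f * coeff p.2 g := by
      rw [← hc]; ring
    rw [hgk]
    refine S.sub_mem (coeff_one_mem S k) (Subring.sum_mem _ fun p hp => ?_)
    have hpa := Finset.HasAntidiagonal.mem_antidiagonal.1 (Finset.mem_of_mem_erase hp)
    have hpne := Finset.ne_of_mem_erase hp
    have hq : p.2 < k := by
      rcases Nat.eq_zero_or_pos p.1 with h1 | h1
      · exfalso; apply hpne; rw [Prod.ext_iff]; omega
      · omega
    exact S.mul_mem (hf _) (ih _ hq)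

end Subring

omit [Algebra ℚ A] in
lemma coeff_mul_one_trunc {f g : A⟦X⟧} {N : ℕ} (hg0 : constantCoeff g = 1)
    (hg : ∀ q, 1 ≤ q → q ≤ N → coeff q g = 0) {j : ℕ} (hj : j ≤ N) :
    coeff j (f * g) = coeff j f := by
  rw [coeff_mul, Finset.sum_eq_single ((j, (0:ℕ)))]
  · simp [hg0]
  · intro p hp hne
    have hpa := Finset.HasAntidiagonal.mem_antidiagonal.1 hp
    have h2 : 1 ≤ p.2 := by
      rcases Nat.eq_zero_or_pos p.2 with h1 | h1
      · exfalso; apply hne; rw [Prod.ext_iff]; omega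
      · omega
    rw [hg p.2 h2 (by omega), mul_zero]
  · simp

lemma coeff_expS_eq_zero_of_trunc {g : A⟦X⟧} {N : ℕ} (hg0 : constantCoeff g = 0)
    (hg : ∀ q, q ≤ N → coeff q g = 0) {j : ℕ} (hj : 1 ≤ j) (hjN : j ≤ N) :
    coeff j (expS g) = 0 := by
  rw [coeff_expS]
  refine Finset.sum_eq_zero fun n hn => ?_
  rcases Nat.eq_zero_or_pos n with rfl | hn1
  · simp only [pow_zero, Nat.factorial_zero, Nat.cast_one, inv_one, one_smul, coeff_one]
    rw [if_neg (by omega)]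
  · have hdvd : (X : A⟦X⟧)^(N+1) ∣ g := X_pow_dvd_iff.2 fun m hm => hg m (by omega)
    have : (X : A⟦X⟧)^(N+1) ∣ g^n := dvd_trans hdvd (dvd_pow_self g (by omega))
    rw [X_pow_dvd_iff.1 this j (by omega), smul_zero]

lemma expS_trunc_congr {f g : A⟦X⟧} {N : ℕ} (hf : constantCoeff f = 0)
    (hg : constantCoeff g = 0) (h : ∀ q, q ≤ N → coeff q f = coeff q g) :
    ∀ j, j ≤ N → coeff j (expS f) = coeff j (expS g) := by
  intro j hj
  have hd : constantCoeff (f - g) = 0 := by rw [map_sub, hf, hg, sub_zero]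
  have hfg : expS f = expS g * expS (f - g) := by
    rw [← expS_add hg hd]; ring_nf
  rw [hfg, coeff_mul_one_trunc (constantCoeff_expS _)
    (fun q hq1 hqN => coeff_expS_eq_zero_of_trunc hd
      (fun q' hq' => by rw [map_sub, h q' hq', sub_self]) hq1 hqN) hj]

lemma coeff_expS_single {g : A⟦X⟧} {n : ℕ} (hn : 1 ≤ n) (hg0 : constantCoeff g = 0)
    (hg : ∀ q, q < n → coeff q g = 0) :
    coeff n (expS g) = coeff n g := by
  rw [coeff_expS]
  rw [Finset.sum_eq_single 1]
  · simp
  · intro m hm hne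
    rcases Nat.eq_zero_or_pos m with rfl | hm1
    · simp only [pow_zero, Nat.factorial_zero, Nat.cast_one, inv_one, one_smul, coeff_one]
      rw [if_neg (by omega)]
    · have hdvd : (X : A⟦X⟧)^n ∣ g := X_pow_dvd_iff.2 fun q hq => hg q hq
      have hm2 : 2 ≤ m := by omega
      have : (X : A⟦X⟧)^(2*n) ∣ g^m := by
        calc (X : A⟦X⟧)^(2*n) = ((X:A⟦X⟧)^n)^2 := by ring
        _ ∣ (g)^2 := pow_dvd_pow_of_dvd hdvd 2
        _ ∣ g^m := pow_dvd_pow g hm2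
      rw [X_pow_dvd_iff.1 this n (by omega), smul_zero]
  · intro h; simp at h; omega

noncomputable def geomS (r : A) (e : ℕ) : A⟦X⟧ :=
  PowerSeries.mk fun n => if e ∣ n then r^(n/e) else 0

noncomputable def Lgeo (r : A) (e : ℕ) : A⟦X⟧ :=
  PowerSeries.mk fun n => if n ≠ 0 ∧ e ∣ n then ((e:ℚ)/(n:ℚ)) • r^(n/e) else 0

lemma constantCoeff_Lgeo (r : A) (e : ℕ) : constantCoeff (Lgeo r e) = 0 := by
  rw [← coeff_zero_eq_constantCoeff_apply, Lgeo, coeff_mk, if_neg (by simp)]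

omit [Algebra ℚ A] in
lemma coeff_one_sub_CX_mul (r : A) (e : ℕ) (f : A⟦X⟧) (k : ℕ) :
    coeff k ((1 - C r * X^e) * f) =
      coeff k f - (if e ≤ k then r * coeff (k-e) f else 0) := by
  rw [sub_mul, one_mul, map_sub]
  congr 1
  rw [mul_assoc, mul_comm ((X:A⟦X⟧)^e), ← mul_assoc, coeff_mul_X_pow']
  split
  · rw [coeff_C_mul]
  · rfl

omit [Algebra ℚ A] in
lemma geomS_mul (r : A) {e : ℕ} (he : 1 ≤ e) :
    (1 - C r * X^e) * geomS r e = 1 := by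
  ext k
  rw [coeff_one_sub_CX_mul, coeff_one]
  simp only [geomS, coeff_mk]
  by_cases hk : k = 0
  · subst hk
    rw [if_pos (dvd_zero e), if_neg (by omega), if_pos rfl]
    simp
  · rw [if_neg hk]
    by_cases hd : e ∣ k
    · have hek : e ≤ k := Nat.le_of_dvd (by omega) hd
      have hd2 : e ∣ k - e := Nat.dvd_sub hd dvd_rfl
      rw [if_pos hd, if_pos hek, if_pos hd2]
      obtain ⟨m, rfl⟩ := hd
      have hm1 : 1 ≤ m := Nat.pos_of_ne_zero fun h => by subst h; simp at hk
      have h1 : e * m - e = e * (m-1) := by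
        cases m with
        | zero => omega
        | succ m => simp [Nat.mul_succ]
      rw [h1, Nat.mul_div_cancel_left _ (by omega), Nat.mul_div_cancel_left _ (by omega)]
      have h2 : r ^ m = r * r^(m-1) := by
        conv_lhs => rw [show m = (m-1) + 1 by omega]
        rw [pow_succ]; ring
      rw [h2]; ring
    · rw [if_neg hd]
      by_cases hek : e ≤ k
      · rw [if_pos hek, if_neg (fun hc => hd (by
          have h3 := Nat.dvd_add hc (dvd_refl e)
          rwa [Nat.sub_add_cancel hek] at h3)), mul_zero, sub_zero]
      · rw [if_neg hek, sub_zero]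

omit [Algebra ℚ A] in
lemma isUnit_one_sub_CX (r : A) {e : ℕ} (he : 1 ≤ e) : IsUnit (1 - C r * X^e) :=
  IsUnit.of_mul_eq_one _ (geomS_mul r he)

lemma coeff_deriv_Lgeo (r : A) (e : ℕ) (m : ℕ) :
    coeff m (d⁄dX A (Lgeo r e)) = if e ∣ m + 1 then (e:ℚ) • r^((m+1)/e) else 0 := by
  rw [coeff_derivative, Lgeo, coeff_mk, mul_cast_succ]
  by_cases hd : e ∣ m + 1
  · rw [if_pos ⟨by omega, hd⟩, if_pos hd, smul_smul]
    congr 1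
    have hne : ((m:ℚ)+1) ≠ 0 := by positivity
    push_cast
    field_simp
  · rw [if_neg (fun hc => hd hc.2), if_neg hd, smul_zero]

lemma deriv_Lgeo (r : A) {e : ℕ} (he : 1 ≤ e) :
    (1 - C r * X^e) * d⁄dX A (Lgeo r e) = (e:ℚ) • (C r * X^(e-1)) := by
  ext n
  rw [coeff_one_sub_CX_mul, coeff_deriv_Lgeo]
  have hrhs : coeff n ((e:ℚ) • (C r * X^(e-1))) = if n = e-1 then (e:ℚ) • r else 0 := by
    rw [coeff_smul, coeff_C_mul, coeff_X_pow]
    split_ifs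
    · rw [mul_one]
    · rw [mul_zero, smul_zero]
  rw [hrhs]
  by_cases hd : e ∣ n + 1
  · by_cases hne : n + 1 = e
    · have h1 : ¬ e ≤ n := by omega
      rw [if_neg h1, sub_zero, if_pos hd, if_pos (by omega : n = e - 1), hne,
        Nat.div_self (by omega), pow_one]
    · obtain ⟨m, hm⟩ := hd
      have hm2 : 2 ≤ m := by
        rcases Nat.lt_or_ge m 2 with h | h
        · interval_cases m <;> omega
        · exact h
      have ha1 : 2*e ≤ e*m := by
        calc 2*e = e*2 := by ring
        _ ≤ e*m := Nat.mul_le_mul_left e hm2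
      have h2e : e ≤ n := by omega
      have ha2 : e*(m-1) = e*m - e := by
        cases m with
        | zero => omega
        | succ m => simp [Nat.mul_succ]
      have hd2 : e ∣ n - e + 1 := ⟨m-1, by omega⟩
      rw [if_pos ⟨m, hm⟩, if_pos h2e, coeff_deriv_Lgeo, if_pos hd2]
      have hq1 : (n+1)/e = m := by rw [hm, Nat.mul_div_cancel_left _ (by omega)]
      have hq2 : (n-e+1)/e = m - 1 := by
        rw [show n - e + 1 = e * (m-1) by omega, Nat.mul_div_cancel_left _ (by omega)]
      rw [hq1, hq2, if_neg (by omega : ¬ n = e - 1), mul_smul_comm, ← pow_succ',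
        show m - 1 + 1 = m by omega, sub_self]
  · rw [if_neg hd, if_neg (fun h : n = e - 1 => hd (by
      rw [show n + 1 = e by omega]))]
    by_cases hek : e ≤ n
    · rw [if_pos hek, coeff_deriv_Lgeo, if_neg (fun hc : e ∣ n - e + 1 => hd (by
        have h3 := Nat.dvd_add hc (dvd_refl e)
        rwa [show n - e + 1 + e = n + 1 by omega] at h3)), mul_zero, sub_zero]
    · rw [if_neg hek, sub_zero]

lemma expS_Lgeo (r : A) {e : ℕ} (he : 1 ≤ e) : expS (Lgeo r e) = geomS r e := by
  have key : (1 - C r * X^e) * expS (Lgeo r e) = 1 := by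
    apply ext_of_deriv
    · rw [Derivation.leibniz, smul_eq_mul, smul_eq_mul, deriv_expS (constantCoeff_Lgeo r e),
        Derivation.map_one_eq_zero]
      have hD : d⁄dX A (1 - C r * X^e) = - ((e:ℚ) • (C r * X^(e-1))) := by
        rw [map_sub, Derivation.map_one_eq_zero, Derivation.leibniz, Derivation.leibniz_pow,
          derivative_C, derivative_X]
        simp only [smul_eq_mul, mul_zero, mul_one, zero_sub, smul_smul]
        rw [← Nat.cast_smul_eq_nsmul ℚ e, mul_smul_comm, add_zero]
      rw [hD]
      calc (1 - C r * X^e) * (d⁄dX A (Lgeo r e) * expS (Lgeo r e)) +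
            expS (Lgeo r e) * -((e:ℚ) • (C r * X^(e-1)))
          = ((1 - C r * X^e) * d⁄dX A (Lgeo r e)) * expS (Lgeo r e) -
            ((e:ℚ) • (C r * X^(e-1))) * expS (Lgeo r e) := by ring
        _ = 0 := by rw [deriv_Lgeo r he]; ring
    · simp only [map_mul, map_sub, map_one, constantCoeff_expS, map_pow, constantCoeff_X,
        constantCoeff_C, mul_one]
      rw [zero_pow (by omega), mul_zero, sub_zero]
  exact (isUnit_one_sub_CX r he).mul_left_cancel (by rw [key, geomS_mul r he])

lemma constantCoeff_qsmul (q : ℚ) (f : A⟦X⟧) :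
    constantCoeff (q • f) = q • constantCoeff f := by
  rw [← coeff_zero_eq_constantCoeff_apply, ← coeff_zero_eq_constantCoeff_apply, coeff_smul]

lemma expS_nsmul {f : A⟦X⟧} (hf : constantCoeff f = 0) (n : ℕ) :
    expS (((n:ℚ)) • f) = (expS f)^n := by
  induction n with
  | zero => simp [expS_zero]
  | succ n ih =>
    have h1 : (((n:ℕ)+1:ℕ):ℚ) • f = (n:ℚ) • f + f := by
      push_cast
      rw [add_smul, one_smul]
    rw [h1, expS_add (by rw [constantCoeff_qsmul, hf, smul_zero]) hf, ih, pow_succ]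

lemma coeff_geomS_mem (S : Subring A) {r : A} (hr : r ∈ S) (e : ℕ) :
    ∀ k, coeff k (geomS r e) ∈ S := by
  intro k
  rw [geomS, coeff_mk]
  split
  · exact S.pow_mem hr _
  · exact S.zero_mem

lemma constantCoeff_geomS (r : A) (e : ℕ) : constantCoeff (geomS r e) = 1 := by
  rw [← coeff_zero_eq_constantCoeff_apply, geomS, coeff_mk, if_pos (dvd_zero e)]
  simp

lemma coeff_expS_zsmul_Lgeo_mem (S : Subring A) {r : A} (hr : r ∈ S) {e : ℕ} (he : 1 ≤ e)
    (c : ℤ) : ∀ k, coeff k (expS ((c:ℚ) • Lgeo r e)) ∈ S := by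
  have hL : constantCoeff (Lgeo r e) = 0 := constantCoeff_Lgeo r e
  rcases le_or_gt 0 c with hc | hc
  · obtain ⟨n, rfl⟩ := Int.eq_ofNat_of_zero_le hc
    intro k
    rw [show ((n:ℤ):ℚ) = (n:ℚ) by push_cast; rfl, expS_nsmul hL, expS_Lgeo r he]
    exact coeff_npow_mem S (coeff_geomS_mem S hr e) n k
  · set n : ℕ := (-c).toNat with hn
    have hcz : (c:ℤ) = -(n:ℤ) := by omega
    have hcn : (c:ℚ) = -(n:ℚ) := by exact_mod_cast congrArg (fun z : ℤ => (z : ℚ)) hcz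
    have hnmem : ∀ k, coeff k (expS ((n:ℚ) • Lgeo r e)) ∈ S := by
      intro k
      rw [expS_nsmul hL, expS_Lgeo r he]
      exact coeff_npow_mem S (coeff_geomS_mem S hr e) n k
    have hinv : (expS ((n:ℚ) • Lgeo r e)) * (expS ((c:ℚ) • Lgeo r e)) = 1 := by
      rw [← expS_add (by rw [constantCoeff_qsmul, hL, smul_zero])
        (by rw [constantCoeff_qsmul, hL, smul_zero]), ← add_smul,
        show (n:ℚ) + (c:ℚ) = 0 by rw [hcn]; ring, zero_smul, expS_zero]
    exact coeff_inv_mem S hinv (constantCoeff_expS _) hnmem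

/-- Witt-type coordinates for a "power sum" sequence `P`. -/
noncomputable def rhoF (P : ℕ → A) : ℕ → A
  | n => (n:ℚ)⁻¹ • (P n - ∑ e ∈ (n.divisors.erase n).attach,
      ((e:ℕ):ℚ) • (rhoF P e)^(n / (e:ℕ)))
  decreasing_by
    have h1 := Finset.mem_of_mem_erase e.2
    have h2 := Finset.ne_of_mem_erase e.2
    rw [Nat.mem_divisors] at h1
    exact lt_of_le_of_ne (Nat.le_of_dvd (Nat.pos_of_ne_zero h1.2) h1.1) h2

lemma ghost_rhoF (P : ℕ → A) {n : ℕ} (hn : 1 ≤ n) :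
    P n = ∑ e ∈ n.divisors, ((e:ℕ):ℚ) • (rhoF P e)^(n / e) := by
  have hrec : rhoF P n = (n:ℚ)⁻¹ • (P n - ∑ e ∈ (n.divisors.erase n).attach,
      ((e:ℕ):ℚ) • (rhoF P e)^(n / (e:ℕ))) := by
    rw [rhoF]
  have hsum : ∑ e ∈ (n.divisors.erase n).attach, ((e:ℕ):ℚ) • (rhoF P e)^(n / (e:ℕ))
      = ∑ e ∈ n.divisors.erase n, ((e:ℕ):ℚ) • (rhoF P e)^(n / e) := by
    rw [← Finset.sum_attach (n.divisors.erase n) (fun e => ((e:ℕ):ℚ) • (rhoF P e)^(n / e))]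
  rw [hsum] at hrec
  have hmem : n ∈ n.divisors := Nat.mem_divisors_self n (by omega)
  rw [← Finset.add_sum_erase _ _ hmem, Nat.div_self (by omega), pow_one]
  have := congrArg (fun x => (n:ℚ) • x) hrec
  simp only [smul_smul, mul_inv_cancel₀ (show (n:ℚ) ≠ 0 by positivity), one_smul] at this
  rw [this]
  ring

noncomputable def LPd (P : ℕ → A) (d : ℕ) : A⟦X⟧ :=
  PowerSeries.mk fun n => if n ≠ 0 ∧ d ∣ n then ((d:ℚ)/(n:ℚ)) • P n else 0

lemma constantCoeff_LPd (P : ℕ → A) (d : ℕ) : constantCoeff (LPd P d) = 0 := by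
  rw [← coeff_zero_eq_constantCoeff_apply, LPd, coeff_mk, if_neg (by simp)]

lemma exp_lemma {d e j : ℕ} (hd : 1 ≤ d) (he : 1 ≤ e) (hlj : Nat.lcm d e ∣ j) :
    (d / Nat.gcd d e) * (j / Nat.lcm d e) = j / e := by
  obtain ⟨t, rfl⟩ := hlj
  set g := Nat.gcd d e with hgdef
  have hg : 1 ≤ g := Nat.gcd_pos_of_pos_left e (by omega)
  have hgd : g ∣ d := Nat.gcd_dvd_left d e
  have hl1 : 1 ≤ Nat.lcm d e := Nat.pos_of_ne_zero (Nat.lcm_ne_zero (by omega) (by omega))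
  have hlcm : Nat.lcm d e = (d / g) * e := by
    have h1 : g * Nat.lcm d e = d * e := Nat.gcd_mul_lcm d e
    have h2 : g * ((d / g) * e) = d * e := by
      rw [← mul_assoc, Nat.mul_div_cancel' hgd]
    exact Nat.eq_of_mul_eq_mul_left (by omega) (h1.trans h2.symm)
  rw [Nat.mul_div_cancel_left t (by omega)]
  rw [hlcm, show d / g * e * t = e * (d / g * t) by ring,
    Nat.mul_div_cancel_left _ (by omega)]

lemma scalar_lemma {d e : ℕ} (c : ℤ) (j : ℕ) :
    ((c * (Nat.gcd d e) : ℤ):ℚ) * ((Nat.lcm d e :ℚ)/(j:ℚ)) = (c:ℚ) * d * e / j := by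
  have hgl : ((Nat.gcd d e):ℚ) * ((Nat.lcm d e):ℚ) = (d:ℚ) * (e:ℚ) := by
    exact_mod_cast Nat.gcd_mul_lcm d e
  push_cast
  calc ((c:ℚ) * (Nat.gcd d e:ℚ)) * ((Nat.lcm d e:ℚ) / (j:ℚ))
      = ((c:ℚ) * ((Nat.gcd d e:ℚ) * (Nat.lcm d e:ℚ))) / (j:ℚ) := by ring
    _ = ((c:ℚ) * ((d:ℚ) * (e:ℚ))) / (j:ℚ) := by rw [hgl]
    _ = (c:ℚ) * (d:ℚ) * (e:ℚ) / (j:ℚ) := by ring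

lemma E1 (P : ℕ → A) (ρ : ℕ → A)
    (hg : ∀ n, 1 ≤ n → P n = ∑ e ∈ n.divisors, ((e:ℕ):ℚ) • (ρ e)^(n / e))
    {d : ℕ} (hd : 1 ≤ d) (c : ℤ) (k : ℕ) :
    ∀ j, j ≤ k → coeff j ((c:ℚ) • LPd P d) =
      coeff j (∑ e ∈ Finset.Icc 1 k, ((c * (Nat.gcd d e) : ℤ):ℚ) •
        Lgeo ((ρ e)^(d / Nat.gcd d e)) (Nat.lcm d e)) := by
  intro j hj
  rw [coeff_smul, LPd, coeff_mk, map_sum]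
  have hterm : ∀ e ∈ Finset.Icc 1 k, coeff j (((c * (Nat.gcd d e):ℤ):ℚ) •
      Lgeo ((ρ e)^(d / Nat.gcd d e)) (Nat.lcm d e)) =
      if j ≠ 0 ∧ d ∣ j ∧ e ∣ j then ((c:ℚ) * d * e / j) • (ρ e)^(j/e) else 0 := by
    intro e he
    rw [Finset.mem_Icc] at he
    rw [coeff_smul, Lgeo, coeff_mk]
    by_cases hcond : j ≠ 0 ∧ d ∣ j ∧ e ∣ j
    · have hlj : Nat.lcm d e ∣ j := Nat.lcm_dvd hcond.2.1 hcond.2.2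
      rw [if_pos ⟨hcond.1, hlj⟩, if_pos hcond, smul_smul, ← pow_mul,
        exp_lemma hd he.1 hlj, scalar_lemma]
    · rw [if_neg (fun hc => hcond ⟨hc.1, dvd_trans (Nat.dvd_lcm_left d e) hc.2,
        dvd_trans (Nat.dvd_lcm_right d e) hc.2⟩), smul_zero, if_neg hcond]
  rw [Finset.sum_congr rfl hterm]
  rcases Nat.eq_zero_or_pos j with rfl | hj1
  · rw [if_neg (by simp), smul_zero]
    symm
    exact Finset.sum_eq_zero fun e he => by rw [if_neg (by simp)]
  · by_cases hdj : d ∣ j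
    · rw [if_pos ⟨by omega, hdj⟩]
      have hsub : j.divisors ⊆ Finset.Icc 1 k := by
        intro e he
        rw [Nat.mem_divisors] at he
        rw [Finset.mem_Icc]
        exact ⟨Nat.pos_of_ne_zero (fun h => by subst h; exact he.2 (Nat.eq_zero_of_zero_dvd he.1)),
          le_trans (Nat.le_of_dvd hj1 he.1) hj⟩
      rw [← Finset.sum_subset hsub (fun e _ hne => by
        rw [if_neg (fun hc => hne (Nat.mem_divisors.2 ⟨hc.2.2, by omega⟩))])]
      rw [hg j hj1, smul_smul, Finset.smul_sum]
      refine Finset.sum_congr rfl fun e he => ?_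
      rw [Nat.mem_divisors] at he
      rw [if_pos ⟨by omega, hdj, he.1⟩, smul_smul]
      congr 1
      have hj0 : (j:ℚ) ≠ 0 := Nat.cast_ne_zero.mpr (by omega)
      field_simp
    · rw [if_neg (fun hc => hdj hc.2), smul_zero]
      symm
      exact Finset.sum_eq_zero fun e he => by
        rw [if_neg (fun hc => hdj hc.2.1)]

lemma E2 (S : Subring A) (P : ℕ → A) (ρ : ℕ → A)
    (hg : ∀ n, 1 ≤ n → P n = ∑ e ∈ n.divisors, ((e:ℕ):ℚ) • (ρ e)^(n / e))
    (hρ : ∀ e, 1 ≤ e → ρ e ∈ S) {d : ℕ} (hd : 1 ≤ d) (c : ℤ) (k : ℕ) :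
    coeff k (expS ((c:ℚ) • LPd P d)) ∈ S := by
  have hconstL : constantCoeff ((c:ℚ) • LPd P d) = 0 := by
    rw [constantCoeff_qsmul, constantCoeff_LPd, smul_zero]
  have hconstR : constantCoeff (∑ e ∈ Finset.Icc 1 k, ((c * (Nat.gcd d e) : ℤ):ℚ) •
      Lgeo ((ρ e)^(d / Nat.gcd d e)) (Nat.lcm d e)) = 0 := by
    rw [map_sum]
    exact Finset.sum_eq_zero fun e _ => by
      rw [constantCoeff_qsmul, constantCoeff_Lgeo, smul_zero]
  have h1 := expS_trunc_congr hconstL hconstR (E1 P ρ hg hd c k) k le_rfl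
  rw [h1, expS_sum (fun e _ => by rw [constantCoeff_qsmul, constantCoeff_Lgeo, smul_zero])]
  refine coeff_prod_mem S (fun e he k' => ?_) k
  rw [Finset.mem_Icc] at he
  exact coeff_expS_zsmul_Lgeo_mem S (S.pow_mem (hρ e he.1) _)
    (Nat.pos_of_ne_zero (Nat.lcm_ne_zero (by omega) (by omega))) _ k'

lemma expS_LPd_one_trunc (P : ℕ → A) (k : ℕ) :
    ∀ j, j ≤ k → coeff j (expS (LPd P 1)) =
      coeff j (∏ e ∈ Finset.Icc 1 k, geomS (rhoF P e) e) := by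
  intro j hj
  have hE := E1 P (rhoF P) (fun n hn => ghost_rhoF P hn) le_rfl (1:ℤ) k
  have hconstL : constantCoeff (((1:ℤ):ℚ) • LPd P 1) = 0 := by
    rw [constantCoeff_qsmul, constantCoeff_LPd, smul_zero]
  have hconstR : constantCoeff (∑ e ∈ Finset.Icc 1 k, (((1:ℤ) * (Nat.gcd 1 e) : ℤ):ℚ) •
      Lgeo ((rhoF P e)^(1 / Nat.gcd 1 e)) (Nat.lcm 1 e)) = 0 := by
    rw [map_sum]
    exact Finset.sum_eq_zero fun e _ => by
      rw [constantCoeff_qsmul, constantCoeff_Lgeo, smul_zero]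
  have htr := expS_trunc_congr hconstL hconstR hE j hj
  rw [expS_sum (fun e _ => by rw [constantCoeff_qsmul, constantCoeff_Lgeo, smul_zero])] at htr
  have hone : ((1:ℤ):ℚ) • LPd P 1 = LPd P 1 := by rw [Int.cast_one, one_smul]
  rw [hone] at htr
  rw [htr]
  congr 1
  refine Finset.prod_congr rfl fun e he => ?_
  rw [Finset.mem_Icc] at he
  have h1 : (((1:ℤ) * (Nat.gcd 1 e) : ℤ):ℚ) = 1 := by
    rw [Nat.gcd_one_left]; norm_num
  rw [h1, one_smul, Nat.gcd_one_left, Nat.lcm_one_left, Nat.div_one, pow_one]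
  exact expS_Lgeo _ he.1

omit [Algebra ℚ A] in
lemma coeff_mul_geomS_self (f : A⟦X⟧) (r : A) {n : ℕ} (hn : 1 ≤ n) :
    coeff n (f * geomS r n) = coeff n f + constantCoeff f * r := by
  rw [coeff_mul]
  have h1 : ((n:ℕ),(0:ℕ)) ∈ antidiagonal n := by simp
  rw [← Finset.add_sum_erase _ _ h1]
  have h2 : ((0:ℕ),(n:ℕ)) ∈ (antidiagonal n).erase ((n:ℕ),(0:ℕ)) := by
    rw [Finset.mem_erase]
    constructor
    · intro hc; rw [Prod.ext_iff] at hc; omega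
    · simp
  rw [← Finset.add_sum_erase _ _ h2]
  have h3 : ∑ p ∈ ((antidiagonal n).erase ((n:ℕ),(0:ℕ))).erase ((0:ℕ),(n:ℕ)),
      coeff p.1 f * coeff p.2 (geomS r n) = 0 := by
    refine Finset.sum_eq_zero fun p hp => ?_
    have hp1 := Finset.mem_erase.1 hp
    have hp2 := Finset.mem_erase.1 hp1.2
    have hpa := Finset.HasAntidiagonal.mem_antidiagonal.1 hp2.2
    have hne1 : p ≠ ((0:ℕ),(n:ℕ)) := hp1.1
    have hne2 : p ≠ ((n:ℕ),(0:ℕ)) := hp2.1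
    have hnd : ¬ (n ∣ p.2) := by
      intro hc
      rcases Nat.eq_zero_or_pos p.2 with h0 | hpos
      · exact hne2 (Prod.ext_iff.2 ⟨by omega, by omega⟩)
      · have := Nat.le_of_dvd hpos hc
        have hp2n : p.2 = n := by omega
        exact hne1 (Prod.ext_iff.2 ⟨by omega, by omega⟩)
    rw [geomS, coeff_mk, if_neg hnd, mul_zero]
  rw [h3, add_zero]
  simp only [geomS, coeff_mk, if_pos (dvd_zero n), if_pos (dvd_refl n),
    Nat.zero_div, pow_zero, mul_one, Nat.div_self (by omega : 0 < n), pow_one,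
    coeff_zero_eq_constantCoeff]

lemma rho_mem (S : Subring A) (P : ℕ → A)
    (hcoeff : ∀ n, coeff n (expS (LPd P 1)) ∈ S) :
    ∀ e, 1 ≤ e → rhoF P e ∈ S := by
  intro e
  induction e using Nat.strong_induction_on with
  | _ n ih =>
    intro hn
    have hprod : (∏ e ∈ Finset.Icc 1 n, geomS (rhoF P e) e) =
        (∏ e ∈ Finset.Icc 1 (n-1), geomS (rhoF P e) e) * geomS (rhoF P n) n := by
      obtain ⟨m, hm⟩ : ∃ m, n = m + 1 := ⟨n-1, by omega⟩
      subst hm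
      rw [Finset.prod_Icc_succ_top (by omega), Nat.add_sub_cancel]
    have hkey := expS_LPd_one_trunc P n n le_rfl
    rw [hprod, coeff_mul_geomS_self _ _ hn] at hkey
    have hconst : constantCoeff (∏ e ∈ Finset.Icc 1 (n-1), geomS (rhoF P e) e) = 1 := by
      rw [map_prod]
      exact Finset.prod_eq_one fun e _ => constantCoeff_geomS _ _
    rw [hconst, one_mul] at hkey
    have hPmem : coeff n (∏ e ∈ Finset.Icc 1 (n-1), geomS (rhoF P e) e) ∈ S := by
      refine coeff_prod_mem S (fun e he k' => ?_) n
      rw [Finset.mem_Icc] at he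
      exact coeff_geomS_mem S (ih e (by omega) he.1) e k'
    have : rhoF P n = coeff n (expS (LPd P 1)) -
        coeff n (∏ e ∈ Finset.Icc 1 (n-1), geomS (rhoF P e) e) := by
      rw [hkey]; ring
    rw [this]
    exact S.sub_mem (hcoeff n) hPmem

/-- The series `∑_{r>0} (-1)^{r-1} a_r h_r u^r / r` for a function `a`. -/
noncomputable def La (a : ℕ → ℚ) : PowerSeries Rh :=
  PowerSeries.mk fun n =>
    if n = 0 then 0
    else ((-1 : ℚ) ^ (n - 1) * a n * (n : ℚ)⁻¹) • MvPolynomial.X n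

/-- The coefficient `ĥ_k` of `ĥ(u) = exp(∑_{r>0} (-1)^{r-1} h_r u^r/r)`
(the case `a ≡ 1`). -/
noncomputable def hhat (k : ℕ) : Rh := PowerSeries.coeff k (expS (La fun _ => 1))

/-- The signed power sums. -/
noncomputable def Pp : ℕ → Rh := fun n => ((-1:ℚ))^(n-1) • MvPolynomial.X n

lemma constantCoeff_La (a : ℕ → ℚ) : constantCoeff (La a) = 0 := by
  rw [← coeff_zero_eq_constantCoeff_apply, La, coeff_mk, if_pos rfl]

lemma La_one_eq : La (fun _ => 1) = LPd Pp 1 := by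
  ext n : 1
  rw [La, LPd, coeff_mk, coeff_mk]
  rcases Nat.eq_zero_or_pos n with rfl | hn
  · rw [if_pos rfl, if_neg (by simp)]
  · rw [if_neg (by omega), if_pos ⟨by omega, one_dvd n⟩, Pp, smul_smul]
    congr 1
    field_simp
    norm_num

lemma La_decomp (c : ℚ) (d : ℕ) (n : ℕ) (hn : n ≠ 0) :
    coeff n (c • LPd Pp d) =
      (((-1:ℚ))^(n-1) * (c * (if d ∣ n then (d:ℚ) else 0)) * (n:ℚ)⁻¹) •
        MvPolynomial.X n := by
  rw [coeff_smul, LPd, coeff_mk]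
  by_cases hdn : d ∣ n
  · rw [if_pos ⟨hn, hdn⟩, if_pos hdn, Pp, smul_smul, smul_smul]
    congr 1
    field_simp
  · rw [if_neg (fun hc => hdn hc.2), smul_zero, if_neg hdn]
    simp

lemma forward_dir (a : ℕ → ℚ) (b : ℕ → ℤ)
    (hA : ∀ n, 0 < n → ∑ i ∈ n.divisors, (((i:ℕ):ℚ) * ((b i : ℤ) : ℚ)) = a n) (k : ℕ) :
    coeff k (expS (La a)) ∈ Algebra.adjoin ℤ (Set.range fun k : ℕ => hhat (k + 1)) := by
  rw [← Subalgebra.mem_toSubring]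
  set W := (Algebra.adjoin ℤ (Set.range fun k : ℕ => hhat (k + 1))).toSubring with hW
  have hhatmem : ∀ n, coeff n (expS (LPd Pp 1)) ∈ W := by
    intro n
    rw [← La_one_eq]
    rcases Nat.eq_zero_or_pos n with rfl | hn
    · rw [coeff_zero_eq_constantCoeff_apply, constantCoeff_expS]
      exact W.one_mem
    · have h2 : coeff n (expS (La fun _ => 1)) = hhat (n-1+1) := by
        unfold hhat
        rw [show n-1+1 = n from by omega]
      rw [h2, hW, Subalgebra.mem_toSubring]
      exact Algebra.subset_adjoin ⟨n-1, rfl⟩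
  have hρ : ∀ e, 1 ≤ e → rhoF Pp e ∈ W := rho_mem W Pp hhatmem
  have hg : ∀ n, 1 ≤ n → Pp n = ∑ e ∈ n.divisors, ((e:ℕ):ℚ) • (rhoF Pp e)^(n / e) :=
    fun n hn => ghost_rhoF Pp hn
  set a' : ℕ → ℚ :=
    fun r => a r - ∑ d ∈ Finset.Icc 1 k, (b d : ℚ) * (if d ∣ r then (d:ℚ) else 0) with ha'
  have hser : La a = La a' + ∑ d ∈ Finset.Icc 1 k, ((b d : ℤ):ℚ) • LPd Pp d := by
    refine PowerSeries.ext fun n => ?_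
    rw [map_add, map_sum]
    rcases Nat.eq_zero_or_pos n with rfl | hn
    · rw [La, La, coeff_mk, coeff_mk, if_pos rfl, if_pos rfl, zero_add]
      symm
      exact Finset.sum_eq_zero fun d _ => by
        rw [coeff_smul, LPd, coeff_mk, if_neg (by simp), smul_zero]
    · rw [La, La, coeff_mk, coeff_mk, if_neg (by omega), if_neg (by omega),
        Finset.sum_congr rfl (fun d _ => La_decomp (b d) d n (by omega)),
        ← Finset.sum_smul, ← add_smul]
      congr 1
      rw [← Finset.sum_mul, ← Finset.mul_sum]
      simp only [ha']
      ring
  have hconstsum : constantCoeff (∑ d ∈ Finset.Icc 1 k, ((b d : ℤ):ℚ) • LPd Pp d) = 0 := by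
    rw [map_sum]
    exact Finset.sum_eq_zero fun d _ => by
      rw [constantCoeff_qsmul, constantCoeff_LPd, smul_zero]
  have hexp : expS (La a) =
      (∏ d ∈ Finset.Icc 1 k, expS (((b d : ℤ):ℚ) • LPd Pp d)) * expS (La a') := by
    rw [hser, expS_add (constantCoeff_La a') hconstsum,
      expS_sum (fun d _ => by rw [constantCoeff_qsmul, constantCoeff_LPd, smul_zero])]
    ring
  have hasmall : ∀ q, 1 ≤ q → q ≤ k → a' q = 0 := by
    intro q h1 h2
    have hsub : q.divisors ⊆ Finset.Icc 1 k := by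
      intro e he
      rw [Nat.mem_divisors] at he
      rw [Finset.mem_Icc]
      exact ⟨Nat.pos_of_ne_zero (fun h => by subst h; exact he.2 (Nat.eq_zero_of_zero_dvd he.1)),
        le_trans (Nat.le_of_dvd h1 he.1) h2⟩
    have hs : ∑ d ∈ Finset.Icc 1 k, (b d : ℚ) * (if d ∣ q then (d:ℚ) else 0)
        = ∑ i ∈ q.divisors, (((i:ℕ):ℚ) * ((b i :ℤ):ℚ)) := by
      rw [← Finset.sum_subset hsub (fun d _ hd => by
        rw [if_neg (fun hc => hd (Nat.mem_divisors.2 ⟨hc, by omega⟩)), mul_zero])]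
      exact Finset.sum_congr rfl fun i hi => by
        rw [if_pos (Nat.mem_divisors.1 hi).1]; ring
    simp only [ha']
    rw [hs, hA q h1]
    ring
  have htrunc : ∀ q, q ≤ k → coeff q (La a') = 0 := by
    intro q hq
    rcases Nat.eq_zero_or_pos q with rfl | h1
    · rw [La, coeff_mk, if_pos rfl]
    · rw [La, coeff_mk, if_neg (by omega), hasmall q h1 hq]
      simp
  rw [hexp, coeff_mul_one_trunc (constantCoeff_expS _)
    (fun q h1 h2 => coeff_expS_eq_zero_of_trunc (constantCoeff_La a') htrunc h1 h2) le_rfl]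
  refine coeff_prod_mem W (fun d hd k' => ?_) k
  rw [Finset.mem_Icc] at hd
  exact E2 W Pp (rhoF Pp) hg hρ hd.1 (b d) k'

/-! ### Backward direction -/

noncomputable def epsH : Rh →ₐ[ℚ] ℚ := MvPolynomial.aeval (fun r : ℕ => ((-1:ℚ))^(r-1))

noncomputable def epsR : Rh →+* ℚ := epsH.toRingHom

lemma eps_smul (q : ℚ) (x : Rh) : epsR (q • x) = q • epsR x := map_smul epsH q x

lemma map_expS {B : Type*} [CommRing B] [Algebra ℚ B] (φ : A →+* B)
    (hφ : ∀ (q : ℚ) (x : A), φ (q • x) = q • φ x) (f : A⟦X⟧) :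
    PowerSeries.map φ (expS f) = expS (PowerSeries.map φ f) := by
  refine PowerSeries.ext fun k => ?_
  rw [coeff_map, coeff_expS, coeff_expS, map_sum]
  refine Finset.sum_congr rfl fun n _ => ?_
  rw [hφ, ← coeff_map, map_pow]

noncomputable def laQ (aa : ℕ → ℚ) : ℚ⟦X⟧ :=
  PowerSeries.mk fun n => if n = 0 then 0 else aa n / n

lemma constantCoeff_laQ (aa : ℕ → ℚ) : constantCoeff (laQ aa) = 0 := by
  rw [← coeff_zero_eq_constantCoeff_apply, laQ, coeff_mk, if_pos rfl]

lemma map_La (aa : ℕ → ℚ) : PowerSeries.map epsR (La aa) = laQ aa := by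
  refine PowerSeries.ext fun n => ?_
  rw [coeff_map, La, laQ, coeff_mk, coeff_mk]
  rcases Nat.eq_zero_or_pos n with rfl | hn
  · rw [if_pos rfl, if_pos rfl, map_zero]
  · rw [if_neg (by omega), if_neg (by omega)]
    have h1 : epsR (((-1:ℚ)^(n-1) * aa n * (n:ℚ)⁻¹) • MvPolynomial.X n)
        = ((-1:ℚ)^(n-1) * aa n * (n:ℚ)⁻¹) * ((-1:ℚ))^(n-1) := by
      rw [eps_smul, smul_eq_mul]
      congr 1
      show epsH (MvPolynomial.X n) = _
      rw [epsH, MvPolynomial.aeval_X]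
    rw [h1]
    have h4 : ((-1:ℚ))^(n-1) * ((-1:ℚ))^(n-1) = 1 := by
      rw [← mul_pow]; norm_num
    calc ((-1:ℚ)^(n-1) * aa n * (n:ℚ)⁻¹) * ((-1:ℚ))^(n-1)
        = ((-1:ℚ)^(n-1) * (-1:ℚ)^(n-1)) * (aa n * (n:ℚ)⁻¹) := by ring
      _ = aa n / n := by rw [h4, one_mul, div_eq_mul_inv]

lemma laQ_one : laQ (fun _ => 1) = Lgeo (1:ℚ) 1 := by
  refine PowerSeries.ext fun n => ?_
  rw [laQ, Lgeo, coeff_mk, coeff_mk]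
  rcases Nat.eq_zero_or_pos n with rfl | hn
  · rw [if_pos rfl, if_neg (by simp)]
  · rw [if_neg (by omega), if_pos ⟨by omega, one_dvd n⟩, one_pow, smul_eq_mul, mul_one,
      Nat.cast_one, one_div]

lemma eps_hhat (k : ℕ) : epsR (hhat k) = 1 := by
  unfold hhat
  have h1 : epsR (coeff k (expS (La fun _ => 1)))
      = coeff k (PowerSeries.map epsR (expS (La fun _ => 1))) := by
    rw [coeff_map]
  rw [h1, map_expS epsR eps_smul, map_La, laQ_one, expS_Lgeo (1:ℚ) le_rfl, geomS, coeff_mk,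
    if_pos (one_dvd k), one_pow]

lemma eps_int {x : Rh} (hx : x ∈ Algebra.adjoin ℤ (Set.range fun k : ℕ => hhat (k+1))) :
    ∃ z : ℤ, epsR x = (z:ℚ) := by
  induction hx using Algebra.adjoin_induction with
  | mem x hx =>
    obtain ⟨k, rfl⟩ := hx
    exact ⟨1, by rw [eps_hhat]; norm_num⟩
  | algebraMap z => exact ⟨z, by simp [epsR, Algebra.algebraMap_eq_smul_one]⟩
  | add x y _ _ hx hy =>
    obtain ⟨z1, h1⟩ := hx; obtain ⟨z2, h2⟩ := hy
    exact ⟨z1 + z2, by rw [map_add, h1, h2]; push_cast; ring⟩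
  | mul x y _ _ hx hy =>
    obtain ⟨z1, h1⟩ := hx; obtain ⟨z2, h2⟩ := hy
    exact ⟨z1 * z2, by rw [map_mul, h1, h2]; push_cast; ring⟩

open ArithmeticFunction in
lemma backward_dir (a : ℕ → ℚ)
    (h : ∀ k : ℕ, PowerSeries.coeff k (expS (La a))
        ∈ Algebra.adjoin ℤ (Set.range fun k : ℕ => hhat (k + 1))) :
    ∀ n : ℕ, 0 < n → ∃ z : ℤ,
      (∑ d ∈ n.divisors, ((ArithmeticFunction.moebius (n / d) : ℤ) : ℚ) * a d)
        = (n : ℚ) * (z : ℚ) := by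
  have hc : ∀ k, ∃ z : ℤ, coeff k (expS (laQ a)) = (z:ℚ) := by
    intro k
    have h2 := eps_int (h k)
    rwa [show epsR (coeff k (expS (La a))) = coeff k (expS (laQ a)) from by
      rw [← map_La a, ← map_expS epsR eps_smul, coeff_map]] at h2
  set SZ : Subring ℚ := (Int.castRingHom ℚ).range with hSZ
  have hcS : ∀ k, coeff k (expS (laQ a)) ∈ SZ := fun k => by
    obtain ⟨z, hz⟩ := hc k
    exact ⟨z, hz.symm⟩
  set B : ℕ → ℚ := fun n =>
    (∑ d ∈ n.divisors, ((ArithmeticFunction.moebius (n / d) : ℤ) : ℚ) * a d) / n with hB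
  have hBsum : ∀ n : ℕ, 0 < n →
      ∑ x ∈ n.divisorsAntidiagonal, (ArithmeticFunction.moebius x.1) • a x.2
        = (n:ℚ) * B n := by
    intro n hn
    have hn0 : (n:ℚ) ≠ 0 := Nat.cast_ne_zero.mpr (by omega)
    rw [Nat.sum_divisorsAntidiagonal' (f := fun u v => (ArithmeticFunction.moebius u) • a v),
      hB, mul_comm, div_mul_cancel₀ _ hn0]
    exact Finset.sum_congr rfl fun d _ => by rw [zsmul_eq_mul]
  have hInv : ∀ n : ℕ, 0 < n → ∑ i ∈ n.divisors, ((i:ℕ):ℚ) * B i = a n :=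
    (ArithmeticFunction.sum_eq_iff_sum_smul_moebius_eq
      (f := fun i => ((i:ℕ):ℚ) * B i) (g := a)).mpr
      (fun n hn => by rw [hBsum n hn])
  have main : ∀ n : ℕ, 0 < n → ∃ z : ℤ, B n = (z:ℚ) := by
    intro n
    induction n using Nat.strong_induction_on with
    | _ n ih =>
      intro hn
      have hn0 : (n:ℚ) ≠ 0 := Nat.cast_ne_zero.mpr (by omega)
      set a' : ℕ → ℚ :=
        fun r => a r - ∑ d ∈ Finset.Icc 1 (n-1), (B d) * (if d ∣ r then (d:ℚ) else 0) with ha'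
      have hterm : ∀ m, m ≠ 0 → ∀ d : ℕ, coeff m ((B d) • Lgeo (1:ℚ) d)
          = (B d * (if d ∣ m then (d:ℚ) else 0))/m := by
        intro m hm d
        rw [coeff_smul, Lgeo, coeff_mk]
        by_cases hdm : d ∣ m
        · rw [if_pos ⟨hm, hdm⟩, if_pos hdm, one_pow, smul_eq_mul, smul_eq_mul, mul_one]
          ring
        · rw [if_neg (fun hc => hdm hc.2), if_neg hdm, smul_zero, mul_zero, zero_div]
      have hser : laQ a = laQ a' + ∑ d ∈ Finset.Icc 1 (n-1), (B d) • Lgeo (1:ℚ) d := by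
        refine PowerSeries.ext fun m => ?_
        rw [map_add, map_sum, laQ, laQ, coeff_mk, coeff_mk]
        rcases Nat.eq_zero_or_pos m with rfl | hm
        · rw [if_pos rfl, if_pos rfl, zero_add]
          symm
          exact Finset.sum_eq_zero fun d _ => by
            rw [coeff_zero_eq_constantCoeff_apply, constantCoeff_qsmul, constantCoeff_Lgeo,
              smul_zero]
        · rw [if_neg (by omega), if_neg (by omega),
            Finset.sum_congr rfl (fun d _ => hterm m (by omega) d), ← Finset.sum_div,
            ← add_div]
          congr 1
          simp only [ha']
          ring
      have hser2 : expS (laQ a') = expS (laQ a) *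
          ∏ d ∈ Finset.Icc 1 (n-1), expS ((-(B d)) • Lgeo (1:ℚ) d) := by
        have hconsts : ∀ d ∈ Finset.Icc 1 (n-1),
            constantCoeff ((-(B d)) • Lgeo (1:ℚ) d) = 0 := fun d _ => by
          rw [constantCoeff_qsmul, constantCoeff_Lgeo, smul_zero]
        rw [← expS_sum hconsts, ← expS_add (constantCoeff_laQ a) (by
          rw [map_sum]; exact Finset.sum_eq_zero hconsts)]
        have h5 : ∑ d ∈ Finset.Icc 1 (n-1), (-(B d)) • Lgeo (1:ℚ) d
            = - ∑ d ∈ Finset.Icc 1 (n-1), (B d) • Lgeo (1:ℚ) d := by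
          rw [← Finset.sum_neg_distrib]
          exact Finset.sum_congr rfl fun d _ => by rw [neg_smul]
        refine congrArg expS ?_
        rw [hser, h5]
        abel
      have hasmall : ∀ q, 1 ≤ q → q < n → a' q = 0 := by
        intro q h1 h2
        have hsub : q.divisors ⊆ Finset.Icc 1 (n-1) := by
          intro e he
          rw [Nat.mem_divisors] at he
          rw [Finset.mem_Icc]
          exact ⟨Nat.pos_of_dvd_of_pos he.1 h1,
            by have := Nat.le_of_dvd h1 he.1; omega⟩
        have hs : ∑ d ∈ Finset.Icc 1 (n-1), (B d) * (if d ∣ q then (d:ℚ) else 0)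
            = ∑ i ∈ q.divisors, ((i:ℕ):ℚ) * B i := by
          rw [← Finset.sum_subset hsub (fun d _ hd => by
            rw [if_neg (fun hc => hd (Nat.mem_divisors.2 ⟨hc, by omega⟩)), mul_zero])]
          exact Finset.sum_congr rfl fun i hi => by
            rw [if_pos (Nat.mem_divisors.1 hi).1]; ring
        simp only [ha']
        rw [hs, hInv q h1]
        ring
      have ha'n : a' n = (n:ℚ) * B n := by
        have hsub : (n.divisors).erase n ⊆ Finset.Icc 1 (n-1) := by
          intro e he
          have h1 := Finset.mem_of_mem_erase he
          have h2 := Finset.ne_of_mem_erase he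
          rw [Nat.mem_divisors] at h1
          rw [Finset.mem_Icc]
          have h3 := Nat.le_of_dvd (by omega) h1.1
          exact ⟨Nat.pos_of_dvd_of_pos h1.1 (by omega), by omega⟩
        have hs : ∑ d ∈ Finset.Icc 1 (n-1), (B d) * (if d ∣ n then (d:ℚ) else 0)
            = ∑ i ∈ (n.divisors).erase n, ((i:ℕ):ℚ) * B i := by
          rw [← Finset.sum_subset hsub (fun d hd hd2 => ?_)]
          · exact Finset.sum_congr rfl fun i hi => by
              rw [if_pos (Nat.mem_divisors.1 (Finset.mem_of_mem_erase hi)).1]; ring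
          · rw [Finset.mem_Icc] at hd
            rw [if_neg (fun hc => hd2 (Finset.mem_erase.2 ⟨by omega,
              Nat.mem_divisors.2 ⟨hc, by omega⟩⟩)), mul_zero]
        have hdiv : ∑ i ∈ n.divisors, ((i:ℕ):ℚ) * B i
            = ((n:ℕ):ℚ) * B n + ∑ i ∈ (n.divisors).erase n, ((i:ℕ):ℚ) * B i := by
          rw [← Finset.add_sum_erase _ _ (Nat.mem_divisors_self n (by omega))]
        simp only [ha']
        rw [hs]
        have := hInv n hn
        rw [hdiv] at this
        linarith [this]
      have hBn : coeff n (expS (laQ a')) = B n := by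
        rw [coeff_expS_single hn (constantCoeff_laQ a') (fun q hq => ?_)]
        · rw [laQ, coeff_mk, if_neg (by omega), ha'n, mul_comm, mul_div_assoc,
            div_self hn0, mul_one]
        · rcases Nat.eq_zero_or_pos q with rfl | h1
          · rw [laQ, coeff_mk, if_pos rfl]
          · rw [laQ, coeff_mk, if_neg (by omega), hasmall q h1 hq, zero_div]
      have hmem : coeff n (expS (laQ a')) ∈ SZ := by
        rw [hser2]
        refine coeff_mul_mem SZ hcS (coeff_prod_mem SZ (fun d hd k' => ?_)) n
        rw [Finset.mem_Icc] at hd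
        obtain ⟨z, hz⟩ := ih d (by omega) hd.1
        rw [show (-(B d)) = (((-z:ℤ)):ℚ) from by rw [hz]; push_cast; ring]
        exact coeff_expS_zsmul_Lgeo_mem SZ SZ.one_mem hd.1 (-z) k'
      rw [hBn] at hmem
      obtain ⟨z, hz⟩ := hmem
      exact ⟨z, hz.symm⟩
  intro n hn
  obtain ⟨z, hz⟩ := main n hn
  refine ⟨z, ?_⟩
  have hn0 : (n:ℚ) ≠ 0 := Nat.cast_ne_zero.mpr (by omega)
  rw [← hz, hB, mul_comm, div_mul_cancel₀ _ hn0]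

/-- All coefficients of `ĥ^{a}(u) = exp(∑_{r>0} (-1)^{r-1} a_r h_r u^r/r)` lie in
the `ℤ`-subalgebra `ℤ[ĥ_k | k > 0]` iff for every `n > 0` the Möbius convolution
`(μ * a)(n) = ∑_{d ∣ n} μ(n/d) a_d` is an integer divisible by `n`. -/
theorem stmt11 (a : ℕ → ℚ) :
    (∀ k : ℕ, PowerSeries.coeff k (expS (La a))
        ∈ Algebra.adjoin ℤ (Set.range fun k : ℕ => hhat (k + 1)))
      ↔ ∀ n : ℕ, 0 < n → ∃ z : ℤ,
          (∑ d ∈ n.divisors, ((ArithmeticFunction.moebius (n / d) : ℤ) : ℚ) * a d)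
            = (n : ℚ) * (z : ℚ) := by
  constructor
  · exact backward_dir a
  · intro hb k
    set b : ℕ → ℤ := fun n => if hn : 0 < n then Classical.choose (hb n hn) else 0 with hbdef
    have hmoeb : ∀ n : ℕ, 0 < n → ∑ x ∈ n.divisorsAntidiagonal,
        (ArithmeticFunction.moebius x.1) • a x.2 = ((n:ℕ):ℚ) * ((b n : ℤ):ℚ) := by
      intro n hn
      rw [Nat.sum_divisorsAntidiagonal'
        (f := fun u v => (ArithmeticFunction.moebius u) • a v)]
      have hspec := Classical.choose_spec (hb n hn)
      simp only [hbdef, dif_pos hn]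
      rw [← hspec]
      exact Finset.sum_congr rfl fun d _ => by rw [zsmul_eq_mul]
    have hA : ∀ n : ℕ, 0 < n → ∑ i ∈ n.divisors, (((i:ℕ):ℚ) * ((b i : ℤ):ℚ)) = a n :=
      (ArithmeticFunction.sum_eq_iff_sum_smul_moebius_eq
        (f := fun i => ((i:ℕ):ℚ) * ((b i:ℤ):ℚ)) (g := a)).mpr hmoeb
    exact forward_dir a b hA k
end

section
/- Let a : ℤ_{>0} → ℤ be a function such that for every prime p, every r ≥ 1, and every m coprime to p, p^r divides a_{m p^r} - a_{m p^{r-1}}. Then for every n > 0, n divides (μ * a)(n) = ∑_{d | n} μ(n/d) a_d. -/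
open Finset ArithmeticFunction
open scoped ArithmeticFunction.Moebius

lemma key12 (a : ℕ → ℤ)
    (h : ∀ p r m : ℕ, p.Prime → 1 ≤ r → Nat.Coprime m p → 0 < m →
      (p : ℤ) ^ r ∣ a (m * p ^ r) - a (m * p ^ (r - 1)))
    (p r m : ℕ) (hp : p.Prime) (hr : 1 ≤ r) (hmp : m.Coprime p) (hm : 0 < m) :
    (p : ℤ) ^ r ∣ ∑ d ∈ (m * p ^ r).divisors, (μ ((m * p ^ r) / d) : ℤ) * a d := by
  have hcop : m.Coprime (p ^ r) := hmp.pow_right r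
  have hS : ∑ d ∈ (m * p ^ r).divisors, (μ ((m * p ^ r) / d) : ℤ) * a d
      = ∑ e ∈ m.divisors, ∑ c ∈ (p ^ r).divisors, (μ ((m * p ^ r) / (e * c)) : ℤ) * a (e * c) := by
    rw [← Finset.sum_product']
    refine Finset.sum_nbij' (fun d : ℕ => (Nat.gcd d m, Nat.gcd d (p ^ r)))
      (fun ec : ℕ × ℕ => ec.1 * ec.2) ?_ ?_ ?_ ?_ ?_
    · rintro d hd
      rw [Nat.mem_divisors] at hd
      simp only [Finset.mem_product, Nat.mem_divisors]
      exact ⟨⟨Nat.gcd_dvd_right _ _, hm.ne'⟩, Nat.gcd_dvd_right _ _,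
        (pow_pos hp.pos r).ne'⟩
    · rintro ⟨e, c⟩ hec
      simp only [Finset.mem_product, Nat.mem_divisors] at hec
      exact Nat.mem_divisors.2 ⟨mul_dvd_mul hec.1.1 hec.2.1,
        (Nat.mul_pos hm (pow_pos hp.pos r)).ne'⟩
    · intro d hd
      rw [Nat.mem_divisors] at hd
      exact (Nat.gcd_mul_gcd_eq_iff_dvd_mul_of_coprime hcop).2 hd.1
    · rintro ⟨e, c⟩ hec
      simp only [Finset.mem_product, Nat.mem_divisors] at hec
      obtain ⟨⟨he, -⟩, hc, -⟩ := hec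
      have h1 : (e * c).gcd m = e := by
        rw [Nat.Coprime.gcd_mul_right_cancel e (hcop.symm.coprime_dvd_left hc),
          Nat.gcd_eq_left he]
      have h2 : (e * c).gcd (p ^ r) = c := by
        rw [Nat.Coprime.gcd_mul_left_cancel c (hcop.coprime_dvd_left he),
          Nat.gcd_eq_left hc]
      simp [h1, h2]
    · intro d hd
      rw [Nat.mem_divisors] at hd
      rw [(Nat.gcd_mul_gcd_eq_iff_dvd_mul_of_coprime hcop).2 hd.1]
  rw [hS]
  refine Finset.dvd_sum ?_
  intro e he
  rw [Nat.mem_divisors] at he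
  obtain ⟨f, hf⟩ := he.1
  have hepos : 0 < e := Nat.pos_of_dvd_of_pos he.1 hm
  have hecop : e.Coprime p := Nat.Coprime.coprime_dvd_left he.1 hmp
  -- rewrite divisor quotients
  have hquot : ∀ j, j ≤ r → (m * p ^ r) / (e * p ^ j) = (m / e) * p ^ (r - j) := by
    intro j hj
    rw [Nat.mul_div_mul_comm he.1 (pow_dvd_pow p hj), Nat.pow_div hj hp.pos]
  rw [Nat.sum_divisors_prime_pow hp]
  -- split off top two terms
  have hmcop : (m / e).Coprime p := Nat.Coprime.coprime_dvd_left (Nat.div_dvd_of_dvd he.1) hmp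
  have hmepos : 0 < m / e := Nat.div_pos (Nat.le_of_dvd hm he.1) hepos
  have hzero : ∀ j ∈ Finset.range (r - 1),
      (μ ((m * p ^ r) / (e * p ^ j)) : ℤ) * a (e * p ^ j) = 0 := by
    intro j hj
    rw [Finset.mem_range] at hj
    have hj' : j ≤ r := by omega
    rw [hquot j hj']
    have : ¬ Squarefree ((m / e) * p ^ (r - j)) := by
      intro hsq
      have hpp : p * p ∣ (m / e) * p ^ (r - j) := by
        refine Dvd.dvd.mul_left ?_ _
        calc p * p = p ^ 2 := (sq p).symm
        _ ∣ p ^ (r - j) := pow_dvd_pow p (by omega)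
      exact hp.not_isUnit (hsq p hpp)
    rw [moebius_eq_zero_of_not_squarefree this]
    simp
  have hsplit : ∑ j ∈ Finset.range (r + 1), (μ ((m * p ^ r) / (e * p ^ j)) : ℤ) * a (e * p ^ j)
      = (μ ((m / e) * p) : ℤ) * a (e * p ^ (r - 1)) + (μ (m / e) : ℤ) * a (e * p ^ r) := by
    have h1 : r + 1 = (r - 1) + 1 + 1 := by omega
    rw [h1, Finset.sum_range_succ, Finset.sum_range_succ, Finset.sum_eq_zero hzero]
    have h2 : r - 1 + 1 = r := by omega
    rw [h2, hquot r le_rfl, hquot (r - 1) (by omega), Nat.sub_self, Nat.sub_sub_self hr, pow_zero,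
      mul_one, pow_one, zero_add]
  rw [hsplit]
  have hmu : (μ ((m / e) * p) : ℤ) = - μ (m / e) := by
    rw [isMultiplicative_moebius.map_mul_of_coprime hmcop, moebius_apply_prime hp]
    ring
  rw [hmu]
  have : (-(μ (m / e) : ℤ)) * a (e * p ^ (r - 1)) + (μ (m / e) : ℤ) * a (e * p ^ r)
      = (μ (m / e) : ℤ) * (a (e * p ^ r) - a (e * p ^ (r - 1))) := by ring
  rw [this]
  exact Dvd.dvd.mul_left (h p r e hp hr hecop hepos) _

/-- If `a : ℤ_{>0} → ℤ` satisfies `p^r ∣ a_{m p^r} - a_{m p^{r-1}}` for every prime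
`p`, `r ≥ 1` and `m` coprime to `p`, then `n ∣ (μ * a)(n) = ∑_{d ∣ n} μ(n/d) a_d`
for every `n > 0`. -/
theorem stmt12 (a : ℕ → ℤ)
    (h : ∀ p r m : ℕ, p.Prime → 1 ≤ r → Nat.Coprime m p → 0 < m →
      (p : ℤ) ^ r ∣ a (m * p ^ r) - a (m * p ^ (r - 1))) :
    ∀ n : ℕ, 0 < n →
      (n : ℤ) ∣ ∑ d ∈ n.divisors, (ArithmeticFunction.moebius (n / d) : ℤ) * a d := by
  intro n hn
  have hprod : (n : ℤ) = ∏ p ∈ n.primeFactors, (p : ℤ) ^ (n.factorization p) := by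
    conv_lhs => rw [← Nat.factorization_prod_pow_eq_self hn.ne']
    rw [Nat.prod_factorization_eq_prod_primeFactors]
    push_cast
    rfl
  rw [hprod]
  refine Finset.prod_dvd_of_coprime ?_ ?_
  · intro p hp q hq hpq
    simp only [Function.onFun]
    refine IsCoprime.pow ?_
    rw [Nat.isCoprime_iff_coprime]
    exact (Nat.coprime_primes (Nat.prime_of_mem_primeFactors hp)
      (Nat.prime_of_mem_primeFactors hq)).2 hpq
  · intro p hp
    have hpp := Nat.prime_of_mem_primeFactors hp
    set r := n.factorization p with hr
    have hr1 : 1 ≤ r := Nat.Prime.factorization_pos_of_dvd hpp hn.ne'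
      (Nat.dvd_of_mem_primeFactors hp)
    have hdecomp : n = (n / p ^ r) * p ^ r := by
      rw [Nat.div_mul_cancel (Nat.ordProj_dvd n p)]
    have hcop : (n / p ^ r).Coprime p := (Nat.coprime_ordCompl hpp hn.ne').symm
    have hpos : 0 < n / p ^ r := Nat.ordCompl_pos p hn.ne'
    have := key12 a h p r (n / p ^ r) hpp hr1 hcop hpos
    rwa [← hdecomp] at this
end

section
/- Conversely, if a : ℤ_{>0} → ℤ satisfies n | (μ * a)(n) for all n > 0, then for every prime p, r ≥ 1 and m coprime to p, p^r divides a_{m p^r} - a_{m p^{r-1}}. -/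
/-- Conversely, if `a : ℤ_{>0} → ℤ` satisfies `n ∣ (μ * a)(n)` for all `n > 0`,
then `p^r ∣ a_{m p^r} - a_{m p^{r-1}}` for every prime `p`, `r ≥ 1` and `m`
coprime to `p`. -/
theorem stmt13 (a : ℕ → ℤ)
    (h : ∀ n : ℕ, 0 < n →
      (n : ℤ) ∣ ∑ d ∈ n.divisors, (ArithmeticFunction.moebius (n / d) : ℤ) * a d) :
    ∀ p r m : ℕ, p.Prime → 1 ≤ r → Nat.Coprime m p → 0 < m →
      (p : ℤ) ^ r ∣ a (m * p ^ r) - a (m * p ^ (r - 1)) := by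
  intro p r m hp hr hmp hm
  set b : ℕ → ℤ := fun n => ∑ d ∈ n.divisors,
      (ArithmeticFunction.moebius (n / d) : ℤ) * a d with hbdef
  have hinv : ∀ n : ℕ, 0 < n → ∑ d ∈ n.divisors, b d = a n := by
    rw [ArithmeticFunction.sum_eq_iff_sum_mul_moebius_eq]
    intro n hn
    simp only [Int.cast_id]
    exact Nat.sum_divisorsAntidiagonal'
      (f := fun x y => (ArithmeticFunction.moebius x : ℤ) * a y)
  have hppos := hp.pos
  set N := m * p ^ r with hN
  set N' := m * p ^ (r - 1) with hN'
  have hNpos : 0 < N := by positivity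
  have hN'pos : 0 < N' := by positivity
  have hN'dvd : N' ∣ N := mul_dvd_mul_left m (pow_dvd_pow p (by omega))
  have hsub : N'.divisors ⊆ N.divisors := Nat.divisors_subset_of_dvd hNpos.ne' hN'dvd
  have key : a N - a N' = ∑ d ∈ N.divisors \ N'.divisors, b d := by
    rw [← hinv N hNpos, ← hinv N' hN'pos, Finset.sum_sdiff_eq_sub hsub]
  rw [key]
  apply Finset.dvd_sum
  intro d hd
  simp only [Finset.mem_sdiff, Nat.mem_divisors] at hd
  obtain ⟨⟨hdN, _⟩, hd'⟩ := hd
  have hd0 : d ≠ 0 := by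
    rintro rfl
    exact hNpos.ne' (Nat.eq_zero_of_zero_dvd hdN)
  have hdne : ¬ d ∣ N' := fun hdvd => hd' ⟨hdvd, hN'pos.ne'⟩
  have hpr : (p : ℕ) ^ r ∣ d := by
    by_contra hc
    apply hdne
    set j := d.factorization p with hj
    have hjr : j < r := by
      by_contra hjr
      exact hc ((pow_dvd_pow p (le_of_not_gt hjr)).trans (Nat.ordProj_dvd d p))
    have hsplit := Nat.ordProj_mul_ordCompl_eq_self d p
    have hcop : Nat.Coprime ((d / p ^ j)) p := (Nat.coprime_ordCompl hp hd0).symm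
    have hem : (d / p ^ j) ∣ m := by
      have h1 : (d / p ^ j) ∣ m * p ^ r := (Nat.ordCompl_dvd d p).trans hdN
      exact (hcop.pow_right r).dvd_of_dvd_mul_right h1
    have h2 : p ^ j ∣ N' := dvd_mul_of_dvd_right (pow_dvd_pow p (by omega)) m
    have h3 : (d / p ^ j) ∣ N' := hem.trans (dvd_mul_right m _)
    have h4 : Nat.Coprime (p ^ j) ((d / p ^ j)) :=
      (hcop.symm).pow_left j
    calc d = p ^ j * (d / p ^ j) := hsplit.symm
      _ ∣ N' := h4.mul_dvd_of_dvd_of_dvd h2 h3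
  have h1 : (d : ℤ) ∣ b d := h d (Nat.pos_of_ne_zero hd0)
  have h2 : (p : ℤ) ^ r ∣ (d : ℤ) := by exact_mod_cast Int.natCast_dvd_natCast.mpr hpr
  exact h2.trans h1
end

section
/- Let p be a prime, r ≥ 1, and m coprime to p, and let d_n = ((1+√2)^n + (1-√2)^n)/2. If p^r ≠ 4 then p^r divides d_{p^r m} - d_{p^{r-1} m}; if p^r = 4 (so p = 2, r = 2, m odd) then 4 divides d_{4m} + d_{2m}. -/
namespace Stmt17aux

def X : ℤ√2 := ⟨1, 1⟩

lemma X_sq : X ^ 2 = 2 * X + 1 := by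
  ext <;> simp [X, pow_two, Zsqrtd.re_mul, Zsqrtd.im_mul]

lemma d_eq (d : ℕ → ℤ)
    (hd : ∀ n : ℕ, (d n : ℝ) = ((1 + Real.sqrt 2) ^ n + (1 - Real.sqrt 2) ^ n) / 2) :
    ∀ n, d n = (X ^ n).re := by
  have hs : Real.sqrt 2 ^ 2 = 2 := Real.sq_sqrt (by norm_num)
  have hrec : ∀ n, d (n + 2) = 2 * d (n + 1) + d n := by
    intro n
    have : ((d (n + 2) : ℤ) : ℝ) = ((2 * d (n + 1) + d n : ℤ) : ℝ) := by
      push_cast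
      rw [hd n, hd (n+1), hd (n+2)]
      linear_combination (((1 + Real.sqrt 2) ^ n + (1 - Real.sqrt 2) ^ n) / 2) * hs
    exact_mod_cast this
  have h0 : d 0 = 1 := by
    have : ((d 0 : ℤ) : ℝ) = ((1 : ℤ) : ℝ) := by rw [hd 0]; norm_num
    exact_mod_cast this
  have h1 : d 1 = 1 := by
    have : ((d 1 : ℤ) : ℝ) = ((1 : ℤ) : ℝ) := by rw [hd 1]; push_cast; ring
    exact_mod_cast this
  have arec : ∀ n, (X ^ (n + 2)).re = 2 * (X ^ (n + 1)).re + (X ^ n).re := by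
    intro n
    have : X ^ (n + 2) = 2 * X ^ (n + 1) + X ^ n := by
      have : X ^ (n + 2) = X ^ n * X ^ 2 := by ring
      rw [this, X_sq]; ring
    rw [this]; simp [Zsqrtd.re_mul]
  have key : ∀ n, d n = (X ^ n).re ∧ d (n + 1) = (X ^ (n + 1)).re := by
    intro n
    induction n with
    | zero =>
      constructor
      · simpa using h0
      · rw [h1]; simp [X]
    | succ k ih =>
      refine ⟨ih.2, ?_⟩
      rw [hrec k, arec k, ih.1, ih.2]
  exact fun n => (key n).1

lemma norm_X_pow (n : ℕ) : Zsqrtd.norm (X ^ n) = (-1) ^ n := by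
  have hX : Zsqrtd.norm X = -1 := by simp [X, Zsqrtd.norm]
  induction n with
  | zero => simp
  | succ k ih => rw [pow_succ, pow_succ, Zsqrtd.norm_mul, ih, hX]

lemma norm_eq (n : ℕ) : (X ^ n).re * (X ^ n).re - 2 * ((X ^ n).im * (X ^ n).im) = (-1) ^ n := by
  have := norm_X_pow n
  rw [Zsqrtd.norm] at this
  linarith [this]

lemma re_double (n : ℕ) : (X ^ (2 * n)).re = 2 * ((X ^ n).re) ^ 2 - (-1) ^ n := by
  have h1 : X ^ (2 * n) = X ^ n * X ^ n := by rw [two_mul, pow_add]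
  have h2 := norm_eq n
  rw [h1, Zsqrtd.re_mul]
  nlinarith [h2]

lemma re_odd (n : ℕ) : Odd ((X ^ n).re) := by
  have h2 := norm_eq n
  have : Odd ((X ^ n).re * (X ^ n).re) := by
    rcases Nat.even_or_odd n with he | ho
    · rw [he.neg_one_pow] at h2
      exact ⟨(X ^ n).im * (X ^ n).im, by linarith⟩
    · rw [ho.neg_one_pow] at h2
      exact ⟨(X ^ n).im * (X ^ n).im - 1, by linarith⟩
  exact (Int.odd_mul.mp this).1

lemma re_two_mul_odd {m : ℕ} (hm : Odd m) {u : ℤ} (hu : (X ^ m).re = 2 * u + 1) :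
    (X ^ (2 * m)).re = 2 * (2 * u + 1) ^ 2 + 1 := by
  rw [re_double m, hu, hm.neg_one_pow]; ring

lemma re_double_even {n : ℕ} (hn : Even n) :
    (X ^ (2 * n)).re = 2 * ((X ^ n).re) ^ 2 - 1 := by
  rw [re_double n, hn.neg_one_pow]

lemma claim (m : ℕ) (hm : Odd m) :
    ∀ k, 2 ≤ k → (2 : ℤ) ^ (k + 1) ∣ (X ^ (2 ^ k * m)).re - 1 := by
  intro k hk
  induction k, hk using Nat.le_induction with
  | base =>
    obtain ⟨u, hu⟩ := re_odd m
    have e1 := re_two_mul_odd hm hu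
    have e2 : (X ^ (2 ^ 2 * m)).re = 2 * ((X ^ (2 * m)).re) ^ 2 - 1 := by
      have h := re_double_even (n := 2 * m) (even_two_mul m)
      rwa [show 2 * (2 * m) = 2 ^ 2 * m by ring] at h
    refine ⟨2 * ((4 * u ^ 2 + 4 * u + 1) * (2 * u ^ 2 + 2 * u + 1)), ?_⟩
    rw [e2, e1]; ring
  | succ k hk ih =>
    obtain ⟨t, ht⟩ := ih
    have hev : Even (2 ^ k * m) :=
      (Nat.even_pow.mpr ⟨even_two, by omega⟩).mul_right m
    have e2 : (X ^ (2 ^ (k + 1) * m)).re = 2 * ((X ^ (2 ^ k * m)).re) ^ 2 - 1 := by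
      have h := re_double_even hev
      rwa [show 2 * (2 ^ k * m) = 2 ^ (k + 1) * m by ring] at h
    have hD : (X ^ (2 ^ k * m)).re = 1 + 2 ^ (k + 1) * t := by linarith
    refine ⟨2 * t + 2 ^ (k + 1) * t ^ 2, ?_⟩
    rw [e2, hD]; ring

lemma case_r1 (m : ℕ) (hm : Odd m) : (2 : ℤ) ∣ (X ^ (2 * m)).re - (X ^ m).re := by
  obtain ⟨u, hu⟩ := re_odd m
  refine ⟨4 * u ^ 2 + 3 * u + 1, ?_⟩
  rw [re_two_mul_odd hm hu, hu]; ring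

lemma case_4 (m : ℕ) (hm : Odd m) : (4 : ℤ) ∣ (X ^ (4 * m)).re + (X ^ (2 * m)).re := by
  obtain ⟨u, hu⟩ := re_odd m
  have e1 := re_two_mul_odd hm hu
  have e2 : (X ^ (4 * m)).re = 2 * ((X ^ (2 * m)).re) ^ 2 - 1 := by
    have h := re_double_even (n := 2 * m) (even_two_mul m)
    rwa [show 2 * (2 * m) = 4 * m by ring] at h
  refine ⟨32 * u ^ 4 + 64 * u ^ 3 + 58 * u ^ 2 + 26 * u + 5, ?_⟩
  rw [e2, e1]; ring

lemma case_rge3 (m : ℕ) (hm : Odd m) (r : ℕ) (hr : 3 ≤ r) :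
    (2 : ℤ) ^ r ∣ (X ^ (2 ^ r * m)).re - (X ^ (2 ^ (r - 1) * m)).re := by
  obtain ⟨t, ht⟩ := claim m hm (r - 1) (by omega)
  rw [show r - 1 + 1 = r from by omega] at ht
  have hev : Even (2 ^ (r - 1) * m) :=
    (Nat.even_pow.mpr ⟨even_two, by omega⟩).mul_right m
  have e2 : (X ^ (2 ^ r * m)).re = 2 * ((X ^ (2 ^ (r - 1) * m)).re) ^ 2 - 1 := by
    have h := re_double_even hev
    rwa [show 2 * (2 ^ (r - 1) * m) = 2 ^ r * m from by
      rw [← mul_assoc, ← pow_succ']; congr 2; omega] at h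
  have hD : (X ^ (2 ^ (r - 1) * m)).re = 1 + 2 ^ r * t := by linarith
  refine ⟨(2 * (1 + 2 ^ r * t) + 1) * t, ?_⟩
  rw [e2, hD]; ring

lemma odd_case (p : ℕ) (hp : p.Prime) (hne : p ≠ 2) (r m : ℕ) (hr : 1 ≤ r) :
    (p : ℤ) ^ r ∣ (X ^ (p ^ r * m)).re - (X ^ (p ^ (r - 1) * m)).re := by
  haveI : Fact p.Prime := ⟨hp⟩
  obtain ⟨k, hk⟩ := hp.odd_of_ne_two hne
  set x : ℤ√2 := X ^ m with hxdef
  obtain ⟨A, B, hA, hB⟩ : ∃ A B : ℤ, x.re = A ∧ x.im = B := ⟨x.re, x.im, rfl, rfl⟩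
  have hx : x = (A : ℤ√2) + Zsqrtd.sqrtd * (B : ℤ√2) := by
    rw [← Zsqrtd.decompose]
    ext <;> simp [hA, hB]
  have h2ne : (2 : ZMod p) ≠ 0 := by
    intro h
    have h2 : ((2 : ℕ) : ZMod p) = 0 := by exact_mod_cast h
    have : p ∣ 2 := by rwa [ZMod.natCast_eq_zero_iff] at h2
    exact hne ((Nat.prime_dvd_prime_iff_eq hp Nat.prime_two).mp this)
  have hsq : ((2 : ZMod p) ^ k) * ((2 : ZMod p) ^ k) = 1 := by
    rw [← pow_add]
    have : k + k = p - 1 := by omega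
    rw [this]
    exact ZMod.pow_card_sub_one_eq_one h2ne
  have hεex : ∃ ε : ℤ, (ε = 1 ∨ ε = -1) ∧ (p : ℤ) ∣ 2 ^ k - ε := by
    rcases mul_self_eq_one_iff.mp hsq with h | h
    · exact ⟨1, Or.inl rfl, (ZMod.intCast_zmod_eq_zero_iff_dvd _ p).mp (by push_cast; rw [h]; ring)⟩
    · exact ⟨-1, Or.inr rfl, (ZMod.intCast_zmod_eq_zero_iff_dvd _ p).mp (by push_cast; rw [h]; ring)⟩
  obtain ⟨ε, hε1, hεdvd⟩ := hεex
  have fermat : ∀ a : ℤ, (p : ℤ) ∣ a ^ p - a := fun a =>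
    (ZMod.intCast_zmod_eq_zero_iff_dvd _ p).mp (by push_cast; rw [ZMod.pow_card]; ring)
  have hs2 : (Zsqrtd.sqrtd : ℤ√2) ^ 2 = 2 := by
    rw [sq, Zsqrtd.dmuld]; norm_num
  have hsp : (Zsqrtd.sqrtd : ℤ√2) ^ p = 2 ^ k * Zsqrtd.sqrtd := by
    rw [hk, pow_succ, pow_mul, hs2]
  obtain ⟨c, hc⟩ : ∃ c : ℤ√2, ((A : ℤ√2) + Zsqrtd.sqrtd * (B : ℤ√2)) ^ p =
      (A : ℤ√2) ^ p + (Zsqrtd.sqrtd * (B : ℤ√2)) ^ p + (p : ℤ√2) * c := by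
    obtain ⟨c, hc⟩ := exists_add_pow_prime_eq hp ((A : ℤ√2)) (Zsqrtd.sqrtd * (B : ℤ√2))
    exact ⟨(A : ℤ√2) * (Zsqrtd.sqrtd * (B : ℤ√2)) * c, by rw [hc]; ring⟩
  have key : x ^ p - ((A : ℤ√2) + ((ε : ℤ) : ℤ√2) * (Zsqrtd.sqrtd * (B : ℤ√2))) =
      (p : ℤ√2) * c + (((A : ℤ√2)) ^ p - (A : ℤ√2))
        + Zsqrtd.sqrtd * ((((2 ^ k - ε : ℤ)) : ℤ√2) * (B : ℤ√2) ^ p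
            + ((ε : ℤ) : ℤ√2) * ((B : ℤ√2) ^ p - (B : ℤ√2))) := by
    conv_lhs => rw [hx]
    rw [hc, mul_pow, hsp]
    push_cast
    ring
  have castdvd : ∀ a : ℤ, (p : ℤ) ∣ a → (p : ℤ√2) ∣ ((a : ℤ) : ℤ√2) := by
    intro a ha
    have := (Zsqrtd.intCast_dvd_intCast (d := 2) (p : ℤ) a).mpr ha
    exact_mod_cast this
  have hfrob : (p : ℤ√2) ∣ x ^ p -
      ((A : ℤ√2) + ((ε : ℤ) : ℤ√2) * (Zsqrtd.sqrtd * (B : ℤ√2))) := by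
    rw [key]
    refine dvd_add (dvd_add (Dvd.intro c rfl) ?_) (Dvd.dvd.mul_left ?_ _)
    · have := castdvd _ (fermat A)
      push_cast at this
      exact this
    · refine dvd_add (dvd_mul_of_dvd_left (castdvd _ hεdvd) _) (Dvd.dvd.mul_left ?_ _)
      have := castdvd _ (fermat B)
      push_cast at this
      exact this
  set y : ℤ√2 := (A : ℤ√2) + ((ε : ℤ) : ℤ√2) * (Zsqrtd.sqrtd * (B : ℤ√2)) with hy
  have main := dvd_sub_pow_of_dvd_sub hfrob (r - 1)
  rw [show r - 1 + 1 = r from by omega, ← pow_mul, ← pow_succ'] at main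
  rw [show r - 1 + 1 = r from by omega] at main
  have hyre : (y ^ (p ^ (r - 1))).re = (X ^ (p ^ (r - 1) * m)).re := by
    rcases hε1 with h | h
    · have hyx : y = x := by rw [hy, h, hx]; push_cast; ring
      rw [hyx, hxdef, ← pow_mul, mul_comm]
    · have hyx : y = star x := by
        rw [hy, h]
        ext <;> simp [Zsqrtd.re_mul, Zsqrtd.im_mul, hA, hB]
      rw [hyx, ← star_pow, Zsqrtd.re_star, hxdef, ← pow_mul, mul_comm]
  have hxre : (x ^ (p ^ r)).re = (X ^ (p ^ r * m)).re := by
    rw [hxdef, ← pow_mul, mul_comm]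
  have main2 : (((p : ℤ) ^ r : ℤ) : ℤ√2) ∣ x ^ (p ^ r) - y ^ (p ^ (r - 1)) := by
    exact_mod_cast main
  have := ((Zsqrtd.intCast_dvd _ _).mp main2).1
  rwa [Zsqrtd.re_sub, hxre, hyre] at this

end Stmt17aux

/-- Let `d_n = ((1+√2)^n + (1-√2)^n)/2` (an integer-valued sequence), `p` prime,
`r ≥ 1` and `m` coprime to `p`.  If `p^r ≠ 4` then `p^r ∣ d_{p^r m} - d_{p^{r-1} m}`;
if `p^r = 4` then `4 ∣ d_{4m} + d_{2m}`. -/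
theorem stmt17 (d : ℕ → ℤ)
    (hd : ∀ n : ℕ, (d n : ℝ) = ((1 + Real.sqrt 2) ^ n + (1 - Real.sqrt 2) ^ n) / 2)
    (p r m : ℕ) (hp : p.Prime) (hr : 1 ≤ r) (hm : Nat.Coprime m p) (hm0 : 0 < m) :
    (p ^ r ≠ 4 → (p : ℤ) ^ r ∣ d (p ^ r * m) - d (p ^ (r - 1) * m)) ∧
      (p ^ r = 4 → (4 : ℤ) ∣ d (4 * m) + d (2 * m)) := by
  have hde := Stmt17aux.d_eq d hd
  constructor
  · intro hne4
    rw [hde, hde]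
    rcases eq_or_ne p 2 with rfl | hp2
    · have hmodd : Odd m := Nat.coprime_two_right.mp hm
      rcases Nat.lt_or_ge r 3 with h3 | h3
      · interval_cases r
        · simpa using Stmt17aux.case_r1 m hmodd
        · exact absurd rfl hne4
      · exact_mod_cast Stmt17aux.case_rge3 m hmodd r h3
    · exact Stmt17aux.odd_case p hp hp2 r m hr
  · intro h4
    have hp2 : p = 2 := by
      have hdvd : p ∣ 4 := h4 ▸ dvd_pow_self p (by omega)
      have : p ∣ 2 ^ 2 := by norm_num [hdvd]
      exact (Nat.prime_dvd_prime_iff_eq hp Nat.prime_two).mp (hp.dvd_of_dvd_pow this)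
    subst hp2
    have hmodd : Odd m := Nat.coprime_two_right.mp hm
    rw [hde, hde]
    exact Stmt17aux.case_4 m hmodd
end
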